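/- For α ∈ (0,2) and β ∈ (-1, α) with β(α-β-1) > 0, one has Γ(α) - Γ(β+1)·Γ(α-β) > 0; equivalently 1/α - B(β+1, α-β) > 0, where B denotes the Euler beta function. Moreover this expression equals 0 when β = 0 or β = α-1. -/

import Mathlib

open MeasureTheory Set

lemma amgm2_strict {l p q : ℝ} (hl0 : 0 < l) (hl1 : l < 1) (hp : 0 < p) (hq : 0 < q)
    (hpq : p ≠ q) : p ^ l * q ^ (1 - l) < l * p + (1 - l) * q := by
  have hl1' : 0 < 1 - l := by linarith
  have h : l * Real.log p + (1 - l) * Real.log q < Real.log (l * p + (1 - l) * q) := by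
    have := strictConcaveOn_log_Ioi.2 (mem_Ioi.2 hp) (mem_Ioi.2 hq) hpq hl0 hl1' (by ring)
    simpa [smul_eq_mul] using this
  have hsum : 0 < l * p + (1 - l) * q := by positivity
  have key : Real.exp (l * Real.log p + (1 - l) * Real.log q) < l * p + (1 - l) * q := by
    calc Real.exp (l * Real.log p + (1 - l) * Real.log q)
        < Real.exp (Real.log (l * p + (1 - l) * q)) := Real.exp_lt_exp.2 h
      _ = l * p + (1 - l) * q := Real.exp_log hsum
  have : Real.exp (l * Real.log p + (1 - l) * Real.log q) = p ^ l * q ^ (1 - l) := by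
    rw [Real.exp_add, ← Real.log_rpow hp, ← Real.log_rpow hq, Real.exp_log (by positivity),
      Real.exp_log (by positivity)]
  linarith [key, this.symm.le]

lemma gamma_strict_logconvex {a b l : ℝ} (ha : 0 < a) (hb : 0 < b) (hab : a ≠ b)
    (hl0 : 0 < l) (hl1 : l < 1) :
    Real.Gamma (l * a + (1 - l) * b) < Real.Gamma a ^ l * Real.Gamma b ^ (1 - l) := by
  have hl1' : 0 < 1 - l := by linarith
  set U := Real.Gamma a with hUdef
  set V := Real.Gamma b with hVdef
  have hUpos : 0 < U := Real.Gamma_pos_of_pos ha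
  have hVpos : 0 < V := Real.Gamma_pos_of_pos hb
  have hmix : 0 < l * a + (1 - l) * b := by positivity
  set u : ℝ → ℝ := fun t => Real.exp (-t) * t ^ (a - 1) with hudef
  set v : ℝ → ℝ := fun t => Real.exp (-t) * t ^ (b - 1) with hvdef
  set g : ℝ → ℝ := fun t => Real.exp (-t) * t ^ (l * a + (1 - l) * b - 1) with hgdef
  set c1 : ℝ := l * (U ^ (l - 1) * V ^ (1 - l)) with hc1def
  set c2 : ℝ := (1 - l) * (U ^ l * V ^ (-l)) with hc2def
  set h : ℝ → ℝ := fun t => c1 * u t + c2 * v t with hhdef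
  have hu_int : MeasureTheory.IntegrableOn u (Ioi 0) := Real.GammaIntegral_convergent ha
  have hv_int : MeasureTheory.IntegrableOn v (Ioi 0) := Real.GammaIntegral_convergent hb
  have hg_int : MeasureTheory.IntegrableOn g (Ioi 0) := Real.GammaIntegral_convergent hmix
  have hh_int : MeasureTheory.IntegrableOn h (Ioi 0) :=
    (hu_int.const_mul c1).add (hv_int.const_mul c2)
  -- pointwise facts
  have hupos : ∀ t : ℝ, 0 < t → 0 < u t := fun t ht => by
    simp only [hudef]; positivity
  have hvpos : ∀ t : ℝ, 0 < t → 0 < v t := fun t ht => by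
    simp only [hvdef]; positivity
  have key : ∀ t : ℝ, 0 < t →
      g t = (U ^ l * V ^ (1 - l)) * ((u t / U) ^ l * (v t / V) ^ (1 - l)) ∧
      h t = (U ^ l * V ^ (1 - l)) * (l * (u t / U) + (1 - l) * (v t / V)) := by
    intro t ht
    have hUl : (0:ℝ) < U ^ l := Real.rpow_pos_of_pos hUpos l
    have hVl : (0:ℝ) < V ^ (1 - l) := Real.rpow_pos_of_pos hVpos (1 - l)
    have eU : U ^ (l - 1) * U = U ^ l := by
      rw [← Real.rpow_add_one hUpos.ne' (l - 1)]; ring_nf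
    have eV : V ^ (-l) * V = V ^ (1 - l) := by
      rw [← Real.rpow_add_one hVpos.ne' (-l)]; ring_nf
    have hguv : g t = u t ^ l * v t ^ (1 - l) := by
      simp only [hgdef, hudef, hvdef]
      rw [Real.mul_rpow (Real.exp_pos _).le (Real.rpow_nonneg ht.le _),
        Real.mul_rpow (Real.exp_pos _).le (Real.rpow_nonneg ht.le _),
        ← Real.exp_mul, ← Real.exp_mul, ← Real.rpow_mul ht.le, ← Real.rpow_mul ht.le,
        mul_mul_mul_comm, ← Real.exp_add, ← Real.rpow_add ht]
      congr 1
      · congr 1; ring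
      · congr 1; ring
    constructor
    · rw [hguv, Real.div_rpow (le_of_lt (hupos t ht)) hUpos.le,
        Real.div_rpow (le_of_lt (hvpos t ht)) hVpos.le]
      field_simp
    · simp only [hhdef, hc1def, hc2def]
      rw [← eU, ← eV]
      field_simp
  have hle : ∀ t ∈ Ioi (0 : ℝ), g t ≤ h t := by
    intro t ht
    rw [mem_Ioi] at ht
    obtain ⟨eg, eh⟩ := key t ht
    rw [eg, eh]
    apply mul_le_mul_of_nonneg_left _ (by positivity)
    rcases eq_or_ne (u t / U) (v t / V) with heq | hne
    · rw [heq, ← Real.rpow_add (by positivity), ]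
      rw [show l + (1 - l) = 1 by ring, Real.rpow_one]
      linarith [mul_comm l (v t / V)]
    · exact (amgm2_strict hl0 hl1 (by positivity) (by positivity) hne).le
  -- the set where equality could hold is a subsingleton
  have hsub : {t : ℝ | 0 < t ∧ u t / U = v t / V}.Subsingleton := by
    intro s hs r hr
    simp only [mem_setOf_eq] at hs hr
    have conv : ∀ t : ℝ, 0 < t → u t / U = v t / V → t ^ (a - b) = U / V := by
      intro t ht heq
      simp only [hudef, hvdef] at heq
      have hexp := Real.exp_pos (-t)
      have htab : t ^ (a - 1) * V = t ^ (b - 1) * U := by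
        field_simp at heq
        nlinarith [heq]
      have : t ^ (a - 1) / t ^ (b - 1) = U / V := by
        rw [div_eq_div_iff (by positivity) hVpos.ne']
        linarith [htab]
      rw [← this, ← Real.rpow_sub ht]
      ring_nf
    have h1 := conv s hs.1 hs.2
    have h2 := conv r hr.1 hr.2
    exact Real.rpow_left_injOn (sub_ne_zero.2 hab) (le_of_lt hs.1) (le_of_lt hr.1)
      (by simp only; rw [h1, h2])
  -- strict integral inequality
  have hint_lt : ∫ t in Ioi (0:ℝ), g t < ∫ t in Ioi (0:ℝ), h t := by
    have hdiff_nonneg : 0 ≤ᵐ[MeasureTheory.volume.restrict (Ioi (0:ℝ))] fun t => h t - g t := by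
      filter_upwards [MeasureTheory.ae_restrict_mem measurableSet_Ioi] with t ht
      exact sub_nonneg.2 (hle t ht)
    have hdiff_int : MeasureTheory.IntegrableOn (fun t => h t - g t) (Ioi 0) := hh_int.sub hg_int
    have hpos : 0 < ∫ t in Ioi (0:ℝ), (h t - g t) := by
      rw [MeasureTheory.setIntegral_pos_iff_support_of_nonneg_ae hdiff_nonneg hdiff_int]
      have hss : Ioi (0:ℝ) \ {t : ℝ | 0 < t ∧ u t / U = v t / V} ⊆
          Function.support (fun t => h t - g t) ∩ Ioi 0 := by
        rintro t ⟨ht, htne⟩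
        rw [mem_Ioi] at ht
        refine ⟨?_, ht⟩
        simp only [Function.mem_support]
        have hne : u t / U ≠ v t / V := fun hcon => htne ⟨ht, hcon⟩
        obtain ⟨eg, eh⟩ := key t ht
        have : g t < h t := by
          rw [eg, eh]
          exact mul_lt_mul_of_pos_left
            (amgm2_strict hl0 hl1 (by positivity) (by positivity) hne) (by positivity)
        exact sub_ne_zero.2 (ne_of_gt this)
      have h1 : MeasureTheory.volume (Ioi (0:ℝ)) ≤
          MeasureTheory.volume ({t : ℝ | 0 < t ∧ u t / U = v t / V}) +
          MeasureTheory.volume (Function.support (fun t => h t - g t) ∩ Ioi 0) := by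
        calc MeasureTheory.volume (Ioi (0:ℝ))
            ≤ MeasureTheory.volume ({t : ℝ | 0 < t ∧ u t / U = v t / V} ∪
              (Ioi (0:ℝ) \ {t : ℝ | 0 < t ∧ u t / U = v t / V})) := by
              apply MeasureTheory.measure_mono
              intro t ht
              by_cases hmem : t ∈ {t : ℝ | 0 < t ∧ u t / U = v t / V}
              · exact Or.inl hmem
              · exact Or.inr ⟨ht, hmem⟩
          _ ≤ _ := le_trans (MeasureTheory.measure_union_le _ _)
              (add_le_add le_rfl (MeasureTheory.measure_mono hss))
      by_contra hzero
      push_neg at hzero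
      have hz : MeasureTheory.volume (Function.support (fun t => h t - g t) ∩ Ioi 0) = 0 :=
        le_antisymm hzero zero_le
      rw [hz, add_zero, hsub.measure_zero] at h1
      simp [Real.volume_Ioi] at h1
    have := MeasureTheory.integral_sub hh_int hg_int
    rw [this] at hpos
    linarith
  -- identify the integrals
  have hg_eq : ∫ t in Ioi (0:ℝ), g t = Real.Gamma (l * a + (1 - l) * b) :=
    (Real.Gamma_eq_integral hmix).symm
  have hh_eq : ∫ t in Ioi (0:ℝ), h t = U ^ l * V ^ (1 - l) := by
    rw [hhdef]
    rw [MeasureTheory.integral_add (hu_int.const_mul c1) (hv_int.const_mul c2),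
      MeasureTheory.integral_const_mul, MeasureTheory.integral_const_mul]
    have hu_eq : ∫ t in Ioi (0:ℝ), u t = U := (Real.Gamma_eq_integral ha).symm
    have hv_eq : ∫ t in Ioi (0:ℝ), v t = V := (Real.Gamma_eq_integral hb).symm
    rw [hu_eq, hv_eq, hc1def, hc2def]
    have e1 : U ^ (l - 1) * U = U ^ l := by
      rw [← Real.rpow_add_one hUpos.ne' (l - 1)]; ring_nf
    have e2 : V ^ (-l) * V = V ^ (1 - l) := by
      rw [← Real.rpow_add_one hVpos.ne' (-l)]; ring_nf
    calc l * (U ^ (l - 1) * V ^ (1 - l)) * U + (1 - l) * (U ^ l * V ^ (-l)) * V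
        = l * (U ^ (l - 1) * U) * V ^ (1 - l) + (1 - l) * U ^ l * (V ^ (-l) * V) := by ring
      _ = l * U ^ l * V ^ (1 - l) + (1 - l) * U ^ l * V ^ (1 - l) := by rw [e1, e2]
      _ = U ^ l * V ^ (1 - l) := by ring
  rw [← hg_eq, ← hh_eq]
  exact hint_lt

theorem stmt_1 (α : ℝ) (hα0 : 0 < α) (hα2 : α < 2) :
    (∀ β : ℝ, -1 < β → β < α → 0 < β * (α - β - 1) →
      0 < Real.Gamma α - Real.Gamma (β + 1) * Real.Gamma (α - β) ∧
      0 < 1 / α - Real.Gamma (β + 1) * Real.Gamma (α - β) / Real.Gamma (α + 1)) ∧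
    (∀ β : ℝ, β = 0 ∨ β = α - 1 →
      1 / α - Real.Gamma (β + 1) * Real.Gamma (α - β) / Real.Gamma (α + 1) = 0) := by
  have hΓα : 0 < Real.Gamma α := Real.Gamma_pos_of_pos hα0
  constructor
  · intro β hβ1 hβα hprod
    have hα1 : α ≠ 1 := by
      intro h; subst h; nlinarith [sq_nonneg β]
    have hαne : α - 1 ≠ 0 := sub_ne_zero.2 hα1
    set l := β / (α - 1) with hldef
    have hll : 0 < l * (1 - l) := by
      have : l * (1 - l) = β * (α - β - 1) / (α - 1) ^ 2 := by
        rw [hldef]; field_simp; ring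
      rw [this]
      positivity
    have hl0 : 0 < l := by nlinarith [sq_nonneg l]
    have hl1 : l < 1 := by nlinarith [sq_nonneg (1 - l)]
    have hlb : l * (α - 1) = β := by rw [hldef]; field_simp
    have h1 : Real.Gamma (β + 1) < Real.Gamma α ^ l := by
      have := gamma_strict_logconvex hα0 one_pos hα1 hl0 hl1
      rw [show l * α + (1 - l) * 1 = β + 1 by rw [← hlb]; ring,
        Real.Gamma_one, Real.one_rpow, mul_one] at this
      exact this
    have h2 : Real.Gamma (α - β) < Real.Gamma α ^ (1 - l) := by
      have := gamma_strict_logconvex hα0 one_pos hα1 (by linarith : (0:ℝ) < 1 - l)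
        (by linarith : 1 - l < 1)
      rw [show (1 - l) * α + (1 - (1 - l)) * 1 = α - β by rw [← hlb]; ring,
        Real.Gamma_one, Real.one_rpow, mul_one] at this
      exact this
    have hb1 : 0 < Real.Gamma (β + 1) := Real.Gamma_pos_of_pos (by linarith)
    have hab : 0 < Real.Gamma (α - β) := Real.Gamma_pos_of_pos (by linarith)
    have hX : Real.Gamma (β + 1) * Real.Gamma (α - β) < Real.Gamma α := by
      have := mul_lt_mul'' h1 h2 hb1.le hab.le
      rwa [← Real.rpow_add hΓα, show l + (1 - l) = 1 by ring, Real.rpow_one] at this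
    refine ⟨by linarith, ?_⟩
    rw [Real.Gamma_add_one hα0.ne', sub_pos, div_lt_div_iff₀ (by positivity) hα0]
    nlinarith
  · intro β hβ
    rcases hβ with h | h
    · subst h
      rw [Real.Gamma_add_one hα0.ne']
      norm_num [Real.Gamma_one]
      field_simp
      ring
    · subst h
      rw [Real.Gamma_add_one hα0.ne', show α - 1 + 1 = α by ring,
        show α - (α - 1) = 1 by ring, Real.Gamma_one, mul_one]
      field_simp
      ring
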